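/- Assume α ∈ (1,3/2), G(−v) = −G(v) and G(v)·v ≥ G*|v|^{2α} for all v ∈ ℝ^d with G* > 0, Φ(|x|) ≥ Φ* > 0 and |F(|x|²)x| ≤ F* for all x ∈ ℝ^d, with F* < 2^{α−1/2} Φ* G*; set C* = 2^α Φ* G* − √2 F* > 0. Let (f_t)_{t∈[0,T)} be a weak solution of the kinetic flocking equation with compactly supported measures. Then: if 𝒢[f₀] > 0, then 𝒢[f_t] ≤ (𝒢[f₀]^{1−α} + (α−1) C* t)^{−1/(α−1)} for all t ∈ [0,T); and if 𝒢[f₀] = 0, then 𝒢[f_t] = 0 for all t ∈ [0,T). -/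

import Mathlib

open MeasureTheory Filter
open scoped RealInnerProductSpace BigOperators ENNReal

noncomputable section

abbrev Euc (d : ℕ) := EuclideanSpace ℝ (Fin d)

abbrev Phase (d : ℕ) := Euc d × Euc d

/-- Euclidean norm on the phase space ℝ^d × ℝ^d ≅ ℝ^{2d}. -/
noncomputable def pnorm {d : ℕ} (z : Phase d) : ℝ :=
  Real.sqrt (‖z.1‖ ^ 2 + ‖z.2‖ ^ 2)

/-- Closed ball of radius `R` (Euclidean norm) in the phase space ℝ^{2d}. -/
def pball (d : ℕ) (R : ℝ) : Set (Phase d) := {z | pnorm z ≤ R}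

/-- Velocity fluctuation 𝒢[f]. -/
noncomputable def velFluc {d : ℕ} (f : Measure (Phase d)) : ℝ :=
  (∫ z, ‖z.2‖ ^ 2 ∂f) - ‖∫ z, z.2 ∂f‖ ^ 2

/-- Position fluctuation Γ[f]. -/
noncomputable def posFluc {d : ℕ} (f : Measure (Phase d)) : ℝ :=
  (∫ z, ‖z.1‖ ^ 2 ∂f) - ‖∫ z, z.1 ∂f‖ ^ 2

/-- Interaction field H_[f]. -/
noncomputable def Hfield {d : ℕ} (Φ : ℝ → ℝ) (G : Euc d → Euc d) (F : ℝ → ℝ) (α : ℝ)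
    (f : Measure (Phase d)) (x v : Euc d) : Euc d :=
  - (∫ z, Φ ‖x - z.1‖ • G (v - z.2) ∂f)
    + velFluc f ^ ((2 * α - 1) / 2) • ∫ z, F (‖x - z.1‖ ^ 2) • (x - z.1) ∂f

/-- A family of compactly supported Borel probability measures is a weak solution of the
kinetic flocking equation on the time set `I` if for every `C¹` test function `φ` the map
`t ↦ ∫ φ d f_t` is differentiable (within `I`) with the stated derivative. -/
def IsWeakSolution {d : ℕ} (Φ : ℝ → ℝ) (G : Euc d → Euc d) (F : ℝ → ℝ) (α : ℝ)
    (I : Set ℝ) (f : ℝ → Measure (Phase d)) : Prop :=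
  (∀ t ∈ I, IsProbabilityMeasure (f t) ∧ ∃ K : Set (Phase d), IsCompact K ∧ f t Kᶜ = 0) ∧
  ∀ φ : Phase d → ℝ, ContDiff ℝ 1 φ → ∀ t ∈ I,
    HasDerivWithinAt (fun s => ∫ z, φ z ∂(f s))
      (∫ z, fderiv ℝ φ z (z.2, Hfield Φ G F α (f t) z.1 z.2) ∂(f t)) I t

/-- Measure-valued solution of the kinetic flocking equation on a time set `I ∋ 0`,
given by a family of compactly supported probability measures together with a flow map `𝒯`. -/
def IsMVSolution {d : ℕ} (Φ : ℝ → ℝ) (G : Euc d → Euc d) (F : ℝ → ℝ) (α : ℝ)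
    (I : Set ℝ) (f₀ : Measure (Phase d)) (f : ℝ → Measure (Phase d))
    (T : ℝ → Phase d → Phase d) : Prop :=
  (0 : ℝ) ∈ I ∧
  ContinuousOn (fun p : ℝ × Phase d => T p.1 p.2) (I ×ˢ Set.univ) ∧
  T 0 = id ∧
  (∀ t ∈ I, IsProbabilityMeasure (f t) ∧ ∃ K : Set (Phase d), IsCompact K ∧ f t Kᶜ = 0) ∧
  (∀ z₀ : Phase d, ∀ t ∈ I,
    HasDerivWithinAt (fun s => T s z₀)
      ((T t z₀).2, Hfield Φ G F α (f t) (T t z₀).1 (T t z₀).2) I t) ∧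
  (∀ t ∈ I, f t = f₀.map (T t))

/-- `π` is a coupling of `f` and `g`. -/
def IsCoupling {d : ℕ} (π : Measure (Phase d × Phase d)) (f g : Measure (Phase d)) : Prop :=
  π.map Prod.fst = f ∧ π.map Prod.snd = g

/-- The Monge–Kantorovich–Rubinstein distance W₁ (with the Euclidean cost on ℝ^{2d}). -/
noncomputable def W1 {d : ℕ} (f g : Measure (Phase d)) : ℝ :=
  sInf {c : ℝ | ∃ π : Measure (Phase d × Phase d), IsProbabilityMeasure π ∧ IsCoupling π f g ∧
    Integrable (fun p => pnorm (p.1 - p.2)) π ∧ c = ∫ p, pnorm (p.1 - p.2) ∂π}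

end


section Aux

open MeasureTheory Filter Set
open scoped RealInnerProductSpace BigOperators ENNReal

/-- Integrability of a continuous function w.r.t. a finite measure vanishing outside a compact. -/
lemma integrable_of_cpt {α E : Type*} [MeasurableSpace α] [TopologicalSpace α]
    [OpensMeasurableSpace α] [TopologicalSpace.PseudoMetrizableSpace α]
    [SecondCountableTopology α]
    [NormedAddCommGroup E] {μ : Measure α} [IsFiniteMeasure μ]
    {K : Set α} (hK : IsCompact K) (h0 : μ Kᶜ = 0) {g : α → E} (hg : Continuous g) :
    Integrable g μ := by
  obtain ⟨C, hC⟩ := hK.exists_bound_of_continuousOn hg.continuousOn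
  have hae : ∀ᵐ x ∂μ, x ∈ K := by
    rw [MeasureTheory.ae_iff]; exact h0
  exact Integrable.mono' (integrable_const C) hg.aestronglyMeasurable
    (by filter_upwards [hae] with x hx using hC x hx)

lemma prod_cpt_null {α : Type*} [MeasurableSpace α] {μ : Measure α} [IsFiniteMeasure μ]
    {K : Set α} (h0 : μ Kᶜ = 0) : (μ.prod μ) (K ×ˢ K)ᶜ = 0 := by
  have hsub : (K ×ˢ K)ᶜ ⊆ (Kᶜ ×ˢ (univ : Set α)) ∪ ((univ : Set α) ×ˢ Kᶜ) := by
    intro z hz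
    simp only [Set.mem_compl_iff, Set.mem_prod, not_and_or] at hz
    rcases hz with h | h <;> simp [Set.mem_prod, h]
  refine measure_mono_null hsub ?_
  refine le_antisymm ?_ zero_le
  calc (μ.prod μ) ((Kᶜ ×ˢ univ) ∪ (univ ×ˢ Kᶜ))
      ≤ (μ.prod μ) (Kᶜ ×ˢ univ) + (μ.prod μ) (univ ×ˢ Kᶜ) := measure_union_le _ _
    _ = 0 := by rw [Measure.prod_prod, Measure.prod_prod, h0]; simp

/-- `∫ g ≤ √(∫ g²)` for probability measures and nonneg `g`. -/
lemma integral_le_sqrt_integral_sq {α : Type*} [MeasurableSpace α] {μ : Measure α}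
    [IsProbabilityMeasure μ] {g : α → ℝ} (hg : Integrable g μ)
    (hg2 : Integrable (fun x => g x ^ 2) μ)
    (hpos : ∀ x, 0 ≤ g x) : ∫ x, g x ∂μ ≤ Real.sqrt (∫ x, g x ^ 2 ∂μ) := by
  set m := ∫ x, g x ∂μ with hm
  have hm0 : 0 ≤ m := integral_nonneg hpos
  have hexp : ∀ x, (g x - m) ^ 2 = g x ^ 2 - 2 * m * g x + m ^ 2 := by intro x; ring
  have h1 : 0 ≤ ∫ x, (g x - m) ^ 2 ∂μ := integral_nonneg fun x => sq_nonneg _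
  have h2 : ∫ x, (g x - m) ^ 2 ∂μ = (∫ x, g x ^ 2 ∂μ) - m ^ 2 := by
    simp_rw [hexp]
    have hi1 : Integrable (fun x => g x ^ 2 - 2 * m * g x) μ := hg2.sub (hg.const_mul (2 * m))
    rw [integral_add hi1 (integrable_const _), integral_sub hg2 (hg.const_mul (2 * m)),
      MeasureTheory.integral_const_mul, integral_const]
    simp [← hm]; ring
  have h3 : m ^ 2 ≤ ∫ x, g x ^ 2 ∂μ := by linarith [h1, h2.symm.le]
  exact (Real.le_sqrt hm0 (le_trans (sq_nonneg m) h3)).mpr h3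

variable {d : ℕ}

instance : OpensMeasurableSpace (Phase d × Phase d) := Prod.opensMeasurableSpace
instance : BorelSpace (Phase d × Phase d) := Prod.borelSpace

lemma euc_dot (u w : Euc d) : ⟪u, w⟫ = ∑ i, u i * w i := by
  rw [PiLp.inner_apply]; simp [RCLike.inner_apply]; exact Finset.sum_congr rfl fun i _ => mul_comm _ _

set_option maxHeartbeats 2000000 in
/-- The core dissipation estimate at a fixed time. -/
lemma core_estimate (Φ F : ℝ → ℝ) (G : Euc d → Euc d) (α : ℝ)
    (hΦc : Continuous Φ) (hGc : Continuous G) (hFc : Continuous F)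
    (hα1 : 1 < α)
    (Gs Φs Fs : ℝ) (hGs : 0 < Gs) (hΦs : 0 < Φs) (hFs0 : 0 ≤ Fs)
    (hGodd : ∀ v : Euc d, G (-v) = -G v)
    (hGcoer : ∀ v : Euc d, Gs * ‖v‖ ^ (2 * α) ≤ ⟪G v, v⟫)
    (hΦlow : ∀ x : Euc d, Φs ≤ Φ ‖x‖)
    (hFbd : ∀ x : Euc d, ‖F (‖x‖ ^ 2) • x‖ ≤ Fs)
    (μ : Measure (Phase d)) [IsProbabilityMeasure μ]
    {K : Set (Phase d)} (hK : IsCompact K) (h0 : μ Kᶜ = 0) :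
    0 ≤ velFluc μ ∧
    (∫ z, 2 * ⟪z.2, Hfield Φ G F α μ z.1 z.2⟫ ∂μ)
      - (∑ i : Fin d, 2 * (∫ z, z.2 i ∂μ) * (∫ z, Hfield Φ G F α μ z.1 z.2 i ∂μ))
      ≤ -((2:ℝ) ^ α * Φs * Gs - Real.sqrt 2 * Fs) * velFluc μ ^ α := by
  classical
  have hα0 : (0:ℝ) < α := by linarith
  set 𝒢 := velFluc μ with h𝒢def
  set c := 𝒢 ^ ((2 * α - 1) / 2) with hcdef
  set vb : Euc d := ∫ z, z.2 ∂μ with hvbdef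
  set π := μ.prod μ with hπdef
  have hπ0 : π (K ×ˢ K)ᶜ = 0 := prod_cpt_null h0
  have hKK : IsCompact (K ×ˢ K) := hK.prod hK
  have intμE : ∀ {g : Phase d → Euc d}, Continuous g → Integrable g μ :=
    fun hg => integrable_of_cpt hK h0 hg
  have intμR : ∀ {g : Phase d → ℝ}, Continuous g → Integrable g μ :=
    fun hg => integrable_of_cpt hK h0 hg
  have intπE : ∀ {g : Phase d × Phase d → Euc d}, Continuous g → Integrable g π :=
    fun hg => integrable_of_cpt hKK hπ0 hg
  have intπR : ∀ {g : Phase d × Phase d → ℝ}, Continuous g → Integrable g π :=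
    fun hg => integrable_of_cpt hKK hπ0 hg
  -- continuity toolkit
  have c11 : Continuous fun p : Phase d × Phase d => p.1.1 :=
    continuous_fst.comp continuous_fst
  have c21 : Continuous fun p : Phase d × Phase d => p.2.1 :=
    continuous_fst.comp continuous_snd
  have c12 : Continuous fun p : Phase d × Phase d => p.1.2 :=
    continuous_snd.comp continuous_fst
  have c22 : Continuous fun p : Phase d × Phase d => p.2.2 :=
    continuous_snd.comp continuous_snd
  have cx : Continuous fun p : Phase d × Phase d => p.1.1 - p.2.1 := c11.sub c21
  have cv : Continuous fun p : Phase d × Phase d => p.1.2 - p.2.2 := c12.sub c22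
  set kG : Phase d × Phase d → Euc d :=
    fun p => Φ ‖p.1.1 - p.2.1‖ • G (p.1.2 - p.2.2) with hkGdef
  set kF : Phase d × Phase d → Euc d :=
    fun p => F (‖p.1.1 - p.2.1‖ ^ 2) • (p.1.1 - p.2.1) with hkFdef
  have hkGc : Continuous kG := ((hΦc.comp cx.norm).smul (hGc.comp cv))
  have hkFc : Continuous kF := ((hFc.comp ((cx.norm).pow 2)).smul cx)
  have hvint : Integrable (fun z : Phase d => z.2) μ := intμE continuous_snd
  have hvsqc : Continuous fun z : Phase d => ‖z.2‖ ^ 2 := (continuous_snd.norm).pow 2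
  have hq : Continuous fun p : Phase d × Phase d => ‖p.1.2 - p.2.2‖ ^ 2 := (cv.norm).pow 2
  -- velocity fluctuation as a double integral
  have key1 : ∫ p, ‖p.1.2 - p.2.2‖ ^ 2 ∂π = 2 * 𝒢 := by
    have hexp : ∀ p : Phase d × Phase d,
        ‖p.1.2 - p.2.2‖ ^ 2 = ‖p.1.2‖ ^ 2 - 2 * ⟪p.1.2, p.2.2⟫ + ‖p.2.2‖ ^ 2 :=
      fun p => norm_sub_sq_real _ _
    have i1 : Integrable (fun p : Phase d × Phase d => ‖p.1.2‖ ^ 2) π :=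
      intπR ((c12.norm).pow 2)
    have i2 : Integrable (fun p : Phase d × Phase d => 2 * ⟪p.1.2, p.2.2⟫) π :=
      (intπR (c12.inner c22)).const_mul 2
    have i3 : Integrable (fun p : Phase d × Phase d => ‖p.2.2‖ ^ 2) π :=
      intπR ((c22.norm).pow 2)
    calc ∫ p, ‖p.1.2 - p.2.2‖ ^ 2 ∂π
        = ∫ p, (‖p.1.2‖ ^ 2 - 2 * ⟪p.1.2, p.2.2⟫ + ‖p.2.2‖ ^ 2) ∂π := by
          exact integral_congr_ae (Eventually.of_forall hexp)
      _ = (∫ p, ‖p.1.2‖ ^ 2 ∂π) - (∫ p, 2 * ⟪p.1.2, p.2.2⟫ ∂π) + ∫ p, ‖p.2.2‖ ^ 2 ∂π := by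
          have i12 : Integrable (fun p : Phase d × Phase d =>
              ‖p.1.2‖ ^ 2 - 2 * ⟪p.1.2, p.2.2⟫) π := i1.sub i2
          rw [integral_add i12 i3, integral_sub i1 i2]
      _ = 2 * 𝒢 := by
          have e1 : ∫ p, ‖p.1.2‖ ^ 2 ∂π = ∫ z, ‖z.2‖ ^ 2 ∂μ := by
            rw [hπdef, MeasureTheory.integral_prod _ i1]
            simp [integral_const]
          have e3 : ∫ p, ‖p.2.2‖ ^ 2 ∂π = ∫ z, ‖z.2‖ ^ 2 ∂μ := by
            rw [hπdef, MeasureTheory.integral_prod _ i3]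
            simp [integral_const]
          have e2 : ∫ p, ⟪p.1.2, p.2.2⟫ ∂π = ‖vb‖ ^ 2 := by
            rw [hπdef, MeasureTheory.integral_prod _ (intπR (c12.inner c22))]
            have : ∀ x : Phase d, ∫ y, ⟪x.2, y.2⟫ ∂μ = ⟪x.2, vb⟫ := fun x =>
              integral_inner hvint x.2
            simp_rw [this]
            have : ∀ x : Phase d, ⟪x.2, vb⟫ = ⟪vb, x.2⟫ := fun x => real_inner_comm _ _
            simp_rw [this]
            rw [integral_inner hvint, real_inner_self_eq_norm_sq]
          have e2' : ∫ p, 2 * ⟪p.1.2, p.2.2⟫ ∂π = 2 * ‖vb‖ ^ 2 := by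
            rw [MeasureTheory.integral_const_mul, e2]
          rw [e1, e3, e2', h𝒢def, velFluc, ← hvbdef]
          ring
  have h𝒢0 : 0 ≤ 𝒢 := by
    have h : 0 ≤ ∫ p, ‖p.1.2 - p.2.2‖ ^ 2 ∂π :=
      integral_nonneg (fun p => sq_nonneg _)
    rw [key1] at h; linarith
  refine ⟨h𝒢0, ?_⟩
  -- decomposition of the field
  have hHf : ∀ z : Phase d, Hfield Φ G F α μ z.1 z.2 =
      -(∫ z', kG (z, z') ∂μ) + c • ∫ z', kF (z, z') ∂μ := fun z => rfl
  have izG : ∀ z : Phase d, Integrable (fun z' => kG (z, z')) μ :=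
    fun z => intμE (hkGc.comp (Continuous.prodMk_right z))
  have izF : ∀ z : Phase d, Integrable (fun z' => kF (z, z')) μ :=
    fun z => intμE (hkFc.comp (Continuous.prodMk_right z))
  have step1 : ∀ (w : Euc d) (z : Phase d), ⟪w, Hfield Φ G F α μ z.1 z.2⟫ =
      -(∫ z', ⟪w, kG (z, z')⟫ ∂μ) + c * ∫ z', ⟪w, kF (z, z')⟫ ∂μ := by
    intro w z
    rw [hHf z, inner_add_right, inner_neg_right, real_inner_smul_right,
      integral_inner (izG z) w, integral_inner (izF z) w]
  have hproj : ∀ (i : Fin d) (g : Phase d → Euc d), Integrable g μ →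
      (∫ z, g z ∂μ) i = ∫ z, g z i ∂μ := by
    intro i g hg
    have h := (EuclideanSpace.proj (𝕜 := ℝ) i).integral_comp_comm hg
    exact h.symm
  have step2 : ∀ (i : Fin d) (z : Phase d), Hfield Φ G F α μ z.1 z.2 i =
      -(∫ z', kG (z, z') i ∂μ) + c * ∫ z', kF (z, z') i ∂μ := by
    intro i z
    rw [hHf z]
    have h1 := hproj i _ (izG z)
    have h2 := hproj i _ (izF z)
    simp only [PiLp.add_apply, PiLp.neg_apply, PiLp.smul_apply, smul_eq_mul, h1, h2]
  -- continuity of scalar kernels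
  have caV : Continuous fun p : Phase d × Phase d => ⟪p.1.2, kG p⟫ := c12.inner hkGc
  have cbV : Continuous fun p : Phase d × Phase d => ⟪p.1.2, kF p⟫ := c12.inner hkFc
  have ckGi : ∀ i : Fin d, Continuous fun p : Phase d × Phase d => kG p i :=
    fun i => (EuclideanSpace.proj (𝕜 := ℝ) i).continuous.comp hkGc
  have ckFi : ∀ i : Fin d, Continuous fun p : Phase d × Phase d => kF p i :=
    fun i => (EuclideanSpace.proj (𝕜 := ℝ) i).continuous.comp hkFc
  -- first term
  have hT1 : ∫ z, 2 * ⟪z.2, Hfield Φ G F α μ z.1 z.2⟫ ∂μ =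
      2 * (-(∫ p, ⟪p.1.2, kG p⟫ ∂π) + c * ∫ p, ⟪p.1.2, kF p⟫ ∂π) := by
    rw [MeasureTheory.integral_const_mul]
    congr 1
    have e1 : (fun z : Phase d => ⟪z.2, Hfield Φ G F α μ z.1 z.2⟫) =
        fun z => -(∫ z', ⟪z.2, kG (z, z')⟫ ∂μ) + c * ∫ z', ⟪z.2, kF (z, z')⟫ ∂μ :=
      funext fun z => step1 z.2 z
    rw [e1]
    have iA : Integrable (fun z : Phase d => ∫ z', ⟪z.2, kG (z, z')⟫ ∂μ) μ :=
      (intπR caV).integral_prod_left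
    have iB : Integrable (fun z : Phase d => ∫ z', ⟪z.2, kF (z, z')⟫ ∂μ) μ :=
      (intπR cbV).integral_prod_left
    have eadd : ∫ z, (-(∫ z', ⟪z.2, kG (z, z')⟫ ∂μ) + c * ∫ z', ⟪z.2, kF (z, z')⟫ ∂μ) ∂μ
        = (∫ z, -(∫ z', ⟪z.2, kG (z, z')⟫ ∂μ) ∂μ)
          + ∫ z, c * ∫ z', ⟪z.2, kF (z, z')⟫ ∂μ ∂μ :=
      integral_add iA.neg (iB.const_mul c)
    rw [eadd, integral_neg, MeasureTheory.integral_const_mul]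
    have eA : ∫ z, ∫ z', ⟪z.2, kG (z, z')⟫ ∂μ ∂μ = ∫ p, ⟪p.1.2, kG p⟫ ∂π :=
      MeasureTheory.integral_integral (intπR caV)
    have eB : ∫ z, ∫ z', ⟪z.2, kF (z, z')⟫ ∂μ ∂μ = ∫ p, ⟪p.1.2, kF p⟫ ∂π :=
      MeasureTheory.integral_integral (intπR cbV)
    rw [eA, eB]
  -- second term
  have hbar : ∀ i : Fin d, (∫ z, z.2 i ∂μ) = vb i := by
    intro i; exact (hproj i _ hvint).symm
  have hHcompInt : ∀ i : Fin d, ∫ z, Hfield Φ G F α μ z.1 z.2 i ∂μ =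
      -(∫ p, kG p i ∂π) + c * ∫ p, kF p i ∂π := by
    intro i
    have e1 : (fun z : Phase d => Hfield Φ G F α μ z.1 z.2 i) =
        fun z => -(∫ z', kG (z, z') i ∂μ) + c * ∫ z', kF (z, z') i ∂μ :=
      funext fun z => step2 i z
    rw [e1]
    have iA : Integrable (fun z : Phase d => ∫ z', kG (z, z') i ∂μ) μ :=
      (intπR (ckGi i)).integral_prod_left
    have iB : Integrable (fun z : Phase d => ∫ z', kF (z, z') i ∂μ) μ :=
      (intπR (ckFi i)).integral_prod_left
    have eadd : ∫ z, (-(∫ z', kG (z, z') i ∂μ) + c * ∫ z', kF (z, z') i ∂μ) ∂μ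
        = (∫ z, -(∫ z', kG (z, z') i ∂μ) ∂μ) + ∫ z, c * ∫ z', kF (z, z') i ∂μ ∂μ :=
      integral_add iA.neg (iB.const_mul c)
    have eA : ∫ z, ∫ z', kG (z, z') i ∂μ ∂μ = ∫ p, kG p i ∂π :=
      MeasureTheory.integral_integral (intπR (ckGi i))
    have eB : ∫ z, ∫ z', kF (z, z') i ∂μ ∂μ = ∫ p, kF p i ∂π :=
      MeasureTheory.integral_integral (intπR (ckFi i))
    rw [eadd, integral_neg, MeasureTheory.integral_const_mul, eA, eB]
  have hsumG : ∑ i, vb i * ∫ p, kG p i ∂π = ∫ p, ⟪vb, kG p⟫ ∂π := by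
    have e1 : ∀ i : Fin d, vb i * ∫ p, kG p i ∂π = ∫ p, vb i * kG p i ∂π :=
      fun i => (MeasureTheory.integral_const_mul _ _).symm
    simp_rw [e1]
    rw [← integral_finset_sum _ (fun i _ => (intπR (ckGi i)).const_mul (vb i))]
    exact integral_congr_ae (Filter.Eventually.of_forall fun p => (euc_dot vb (kG p)).symm)
  have hsumF : ∑ i, vb i * ∫ p, kF p i ∂π = ∫ p, ⟪vb, kF p⟫ ∂π := by
    have e1 : ∀ i : Fin d, vb i * ∫ p, kF p i ∂π = ∫ p, vb i * kF p i ∂π :=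
      fun i => (MeasureTheory.integral_const_mul _ _).symm
    simp_rw [e1]
    rw [← integral_finset_sum _ (fun i _ => (intπR (ckFi i)).const_mul (vb i))]
    exact integral_congr_ae (Filter.Eventually.of_forall fun p => (euc_dot vb (kF p)).symm)
  have hT2 : (∑ i : Fin d, 2 * (∫ z, z.2 i ∂μ) * (∫ z, Hfield Φ G F α μ z.1 z.2 i ∂μ))
      = 2 * (-(∫ p, ⟪vb, kG p⟫ ∂π) + c * ∫ p, ⟪vb, kF p⟫ ∂π) := by
    calc (∑ i : Fin d, 2 * (∫ z, z.2 i ∂μ) * (∫ z, Hfield Φ G F α μ z.1 z.2 i ∂μ))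
        = ∑ i : Fin d,
            (2 * (vb i * (-(∫ p, kG p i ∂π) + c * ∫ p, kF p i ∂π))) := by
          refine Finset.sum_congr rfl fun i _ => ?_
          rw [hbar i, hHcompInt i]; ring
      _ = 2 * ∑ i : Fin d, (vb i * (-(∫ p, kG p i ∂π) + c * ∫ p, kF p i ∂π)) := by
          rw [Finset.mul_sum]
      _ = 2 * (∑ i : Fin d,
            ((-(vb i * ∫ p, kG p i ∂π)) + c * (vb i * ∫ p, kF p i ∂π))) := by
          congr 1; exact Finset.sum_congr rfl fun i _ => by ring
      _ = 2 * ((-(∑ i : Fin d, vb i * ∫ p, kG p i ∂π))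
            + c * ∑ i : Fin d, (vb i * ∫ p, kF p i ∂π)) := by
          rw [Finset.sum_add_distrib, Finset.sum_neg_distrib, Finset.mul_sum]
      _ = 2 * (-(∫ p, ⟪vb, kG p⟫ ∂π) + c * ∫ p, ⟪vb, kF p⟫ ∂π) := by
          rw [hsumG, hsumF]
  -- assemble the dissipation identity
  set A := ∫ p, ⟪p.1.2 - vb, kG p⟫ ∂π with hAdef
  set B := ∫ p, ⟪p.1.2 - vb, kF p⟫ ∂π with hBdef
  have hsubG : ∫ p, ⟪p.1.2, kG p⟫ ∂π - ∫ p, ⟪vb, kG p⟫ ∂π = A := by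
    rw [hAdef, ← integral_sub (intπR caV) (intπR (continuous_const.inner hkGc))]
    exact integral_congr_ae (Filter.Eventually.of_forall fun p => (inner_sub_left _ _ _).symm)
  have hsubF : ∫ p, ⟪p.1.2, kF p⟫ ∂π - ∫ p, ⟪vb, kF p⟫ ∂π = B := by
    rw [hBdef, ← integral_sub (intπR cbV) (intπR (continuous_const.inner hkFc))]
    exact integral_congr_ae (Filter.Eventually.of_forall fun p => (inner_sub_left _ _ _).symm)
  have hD : (∫ z, 2 * ⟪z.2, Hfield Φ G F α μ z.1 z.2⟫ ∂μ)
      - (∑ i : Fin d, 2 * (∫ z, z.2 i ∂μ) * (∫ z, Hfield Φ G F α μ z.1 z.2 i ∂μ))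
      = -(2 * A) + 2 * (c * B) := by
    rw [hT1, hT2, ← hsubG, ← hsubF]; ring
  -- symmetrization
  have hkGswap : ∀ p : Phase d × Phase d, kG p.swap = -kG p := by
    intro p
    show Φ ‖p.2.1 - p.1.1‖ • G (p.2.2 - p.1.2) = -(Φ ‖p.1.1 - p.2.1‖ • G (p.1.2 - p.2.2))
    rw [norm_sub_rev, ← neg_sub p.1.2 p.2.2, hGodd, smul_neg]
  have hkFswap : ∀ p : Phase d × Phase d, kF p.swap = -kF p := by
    intro p
    show F (‖p.2.1 - p.1.1‖ ^ 2) • (p.2.1 - p.1.1)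
        = -(F (‖p.1.1 - p.2.1‖ ^ 2) • (p.1.1 - p.2.1))
    rw [norm_sub_rev, ← neg_sub p.1.1 p.2.1, smul_neg]
  have hswapA : A = ∫ p, -⟪p.2.2 - vb, kG p⟫ ∂π := by
    calc A = ∫ p, ⟪p.swap.1.2 - vb, kG p.swap⟫ ∂π := by
          rw [hAdef, hπdef]
          exact (MeasureTheory.integral_prod_swap
            (fun p : Phase d × Phase d => ⟪p.1.2 - vb, kG p⟫)).symm
      _ = ∫ p, -⟪p.2.2 - vb, kG p⟫ ∂π :=
          integral_congr_ae (Filter.Eventually.of_forall fun p => by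
            show ⟪p.2.2 - vb, kG p.swap⟫ = -⟪p.2.2 - vb, kG p⟫
            rw [hkGswap p, inner_neg_right])
  have hswapB : B = ∫ p, -⟪p.2.2 - vb, kF p⟫ ∂π := by
    calc B = ∫ p, ⟪p.swap.1.2 - vb, kF p.swap⟫ ∂π := by
          rw [hBdef, hπdef]
          exact (MeasureTheory.integral_prod_swap
            (fun p : Phase d × Phase d => ⟪p.1.2 - vb, kF p⟫)).symm
      _ = ∫ p, -⟪p.2.2 - vb, kF p⟫ ∂π :=
          integral_congr_ae (Filter.Eventually.of_forall fun p => by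
            show ⟪p.2.2 - vb, kF p.swap⟫ = -⟪p.2.2 - vb, kF p⟫
            rw [hkFswap p, inner_neg_right])
  have h2A : 2 * A = ∫ p, ⟪p.1.2 - p.2.2, kG p⟫ ∂π := by
    have hiA : Integrable (fun p : Phase d × Phase d => ⟪p.1.2 - vb, kG p⟫) π :=
      intπR ((c12.sub continuous_const).inner hkGc)
    have hiA' : Integrable (fun p : Phase d × Phase d => -⟪p.2.2 - vb, kG p⟫) π :=
      (intπR ((c22.sub continuous_const).inner hkGc)).neg
    calc 2 * A = A + A := by ring
      _ = (∫ p, ⟪p.1.2 - vb, kG p⟫ ∂π) + ∫ p, -⟪p.2.2 - vb, kG p⟫ ∂π :=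
          congrArg₂ (· + ·) hAdef hswapA
      _ = ∫ p, (⟪p.1.2 - vb, kG p⟫ + -⟪p.2.2 - vb, kG p⟫) ∂π := (integral_add hiA hiA').symm
      _ = ∫ p, ⟪p.1.2 - p.2.2, kG p⟫ ∂π :=
          integral_congr_ae (Filter.Eventually.of_forall fun p => by
            show ⟪p.1.2 - vb, kG p⟫ + -⟪p.2.2 - vb, kG p⟫ = ⟪p.1.2 - p.2.2, kG p⟫
            rw [← sub_eq_add_neg, ← inner_sub_left, sub_sub_sub_cancel_right])
  have h2B : 2 * B = ∫ p, ⟪p.1.2 - p.2.2, kF p⟫ ∂π := by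
    have hiB : Integrable (fun p : Phase d × Phase d => ⟪p.1.2 - vb, kF p⟫) π :=
      intπR ((c12.sub continuous_const).inner hkFc)
    have hiB' : Integrable (fun p : Phase d × Phase d => -⟪p.2.2 - vb, kF p⟫) π :=
      (intπR ((c22.sub continuous_const).inner hkFc)).neg
    calc 2 * B = B + B := by ring
      _ = (∫ p, ⟪p.1.2 - vb, kF p⟫ ∂π) + ∫ p, -⟪p.2.2 - vb, kF p⟫ ∂π :=
          congrArg₂ (· + ·) hBdef hswapB
      _ = ∫ p, (⟪p.1.2 - vb, kF p⟫ + -⟪p.2.2 - vb, kF p⟫) ∂π := (integral_add hiB hiB').symm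
      _ = ∫ p, ⟪p.1.2 - p.2.2, kF p⟫ ∂π :=
          integral_congr_ae (Filter.Eventually.of_forall fun p => by
            show ⟪p.1.2 - vb, kF p⟫ + -⟪p.2.2 - vb, kF p⟫ = ⟪p.1.2 - p.2.2, kF p⟫
            rw [← sub_eq_add_neg, ← inner_sub_left, sub_sub_sub_cancel_right])
  -- lower bound for A via coercivity and Jensen
  have hcoer' : ∀ p : Phase d × Phase d,
      Φs * (Gs * (‖p.1.2 - p.2.2‖ ^ 2) ^ α) ≤ ⟪p.1.2 - p.2.2, kG p⟫ := by
    intro p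
    have h2α : (‖p.1.2 - p.2.2‖ ^ 2) ^ α = ‖p.1.2 - p.2.2‖ ^ (2 * α) := by
      rw [← Real.rpow_natCast ‖p.1.2 - p.2.2‖ 2, ← Real.rpow_mul (norm_nonneg _)]
      norm_num
    have h1 : Gs * (‖p.1.2 - p.2.2‖ ^ 2) ^ α ≤ ⟪p.1.2 - p.2.2, G (p.1.2 - p.2.2)⟫ := by
      rw [h2α, real_inner_comm]; exact hGcoer _
    have h1' : 0 ≤ ⟪p.1.2 - p.2.2, G (p.1.2 - p.2.2)⟫ :=
      le_trans (mul_nonneg hGs.le (Real.rpow_nonneg (sq_nonneg _) α)) h1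
    have hsm : ⟪p.1.2 - p.2.2, kG p⟫
        = Φ ‖p.1.1 - p.2.1‖ * ⟪p.1.2 - p.2.2, G (p.1.2 - p.2.2)⟫ :=
      real_inner_smul_right _ _ _
    rw [hsm]
    calc Φs * (Gs * (‖p.1.2 - p.2.2‖ ^ 2) ^ α)
        ≤ Φs * ⟪p.1.2 - p.2.2, G (p.1.2 - p.2.2)⟫ := mul_le_mul_of_nonneg_left h1 hΦs.le
      _ ≤ Φ ‖p.1.1 - p.2.1‖ * ⟪p.1.2 - p.2.2, G (p.1.2 - p.2.2)⟫ :=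
          mul_le_mul_of_nonneg_right (hΦlow _) h1'
  have hqint : Integrable (fun p : Phase d × Phase d => ‖p.1.2 - p.2.2‖ ^ 2) π := intπR hq
  have hqαc : Continuous fun p : Phase d × Phase d => (‖p.1.2 - p.2.2‖ ^ 2) ^ α :=
    hq.rpow_const fun p => Or.inr hα0.le
  have hqαint : Integrable (fun p : Phase d × Phase d => (‖p.1.2 - p.2.2‖ ^ 2) ^ α) π :=
    intπR hqαc
  have hJen : (2 * 𝒢) ^ α ≤ ∫ p, (‖p.1.2 - p.2.2‖ ^ 2) ^ α ∂π := by
    have hcvx : ConvexOn ℝ (Set.Ici (0:ℝ)) fun x : ℝ => x ^ α := convexOn_rpow hα1.le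
    have hcont : ContinuousOn (fun x : ℝ => x ^ α) (Set.Ici (0:ℝ)) := fun x _ =>
      (Real.continuousAt_rpow_const x α (Or.inr hα0.le)).continuousWithinAt
    have h := hcvx.map_integral_le hcont isClosed_Ici
      (Filter.Eventually.of_forall fun p => Set.mem_Ici.mpr (sq_nonneg _)) hqint hqαint
    rw [key1] at h
    exact h
  have hAlow : Φs * (Gs * ((2:ℝ) ^ α * 𝒢 ^ α)) ≤ 2 * A := by
    have hmono : ∫ p, Φs * (Gs * (‖p.1.2 - p.2.2‖ ^ 2) ^ α) ∂π
        ≤ ∫ p, ⟪p.1.2 - p.2.2, kG p⟫ ∂π :=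
      integral_mono ((hqαint.const_mul Gs).const_mul Φs) (intπR (cv.inner hkGc)) hcoer'
    have heq : ∫ p, Φs * (Gs * (‖p.1.2 - p.2.2‖ ^ 2) ^ α) ∂π
        = Φs * (Gs * ∫ p, (‖p.1.2 - p.2.2‖ ^ 2) ^ α ∂π) := by
      rw [MeasureTheory.integral_const_mul, MeasureTheory.integral_const_mul]
    rw [heq, ← h2A] at hmono
    have hmr : (2 * 𝒢) ^ α = (2:ℝ) ^ α * 𝒢 ^ α := Real.mul_rpow (by norm_num) h𝒢0
    calc Φs * (Gs * ((2:ℝ) ^ α * 𝒢 ^ α)) = Φs * (Gs * (2 * 𝒢) ^ α) := by rw [hmr]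
      _ ≤ Φs * (Gs * ∫ p, (‖p.1.2 - p.2.2‖ ^ 2) ^ α ∂π) :=
          mul_le_mul_of_nonneg_left (mul_le_mul_of_nonneg_left hJen hGs.le) hΦs.le
      _ ≤ 2 * A := hmono
  -- upper bound for B
  have hnormint : Integrable (fun p : Phase d × Phase d => ‖p.1.2 - p.2.2‖) π := intπR cv.norm
  have hBpt : ∀ p : Phase d × Phase d, ⟪p.1.2 - p.2.2, kF p⟫ ≤ ‖p.1.2 - p.2.2‖ * Fs := by
    intro p
    calc ⟪p.1.2 - p.2.2, kF p⟫ ≤ |⟪p.1.2 - p.2.2, kF p⟫| := le_abs_self _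
      _ ≤ ‖p.1.2 - p.2.2‖ * ‖kF p‖ := abs_real_inner_le_norm _ _
      _ ≤ ‖p.1.2 - p.2.2‖ * Fs := mul_le_mul_of_nonneg_left (hFbd _) (norm_nonneg _)
  have h2Ble : 2 * B ≤ Fs * Real.sqrt (2 * 𝒢) := by
    rw [h2B]
    calc ∫ p, ⟪p.1.2 - p.2.2, kF p⟫ ∂π ≤ ∫ p, ‖p.1.2 - p.2.2‖ * Fs ∂π :=
          integral_mono (intπR (cv.inner hkFc)) (hnormint.mul_const Fs) hBpt
      _ = (∫ p, ‖p.1.2 - p.2.2‖ ∂π) * Fs := by rw [integral_mul_const]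
      _ ≤ Real.sqrt (2 * 𝒢) * Fs := by
          refine mul_le_mul_of_nonneg_right ?_ hFs0
          have hsq := integral_le_sqrt_integral_sq hnormint hqint (fun p => norm_nonneg _)
          rw [key1] at hsq; exact hsq
      _ = Fs * Real.sqrt (2 * 𝒢) := mul_comm _ _
  have hc0 : 0 ≤ c := Real.rpow_nonneg h𝒢0 _
  have hcB : 2 * (c * B) ≤ Real.sqrt 2 * Fs * 𝒢 ^ α := by
    have h1 : c * (2 * B) ≤ c * (Fs * Real.sqrt (2 * 𝒢)) :=
      mul_le_mul_of_nonneg_left h2Ble hc0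
    have hsplit : Real.sqrt (2 * 𝒢) = Real.sqrt 2 * Real.sqrt 𝒢 :=
      Real.sqrt_mul (by norm_num) _
    have hpow : c * Real.sqrt 𝒢 = 𝒢 ^ α := by
      rcases eq_or_lt_of_le h𝒢0 with h | h
      · rw [hcdef, ← h, Real.sqrt_zero, mul_zero,
          Real.zero_rpow (ne_of_gt hα0)]
      · rw [hcdef, Real.sqrt_eq_rpow, ← Real.rpow_add h]
        congr 1; ring
    calc 2 * (c * B) = c * (2 * B) := by ring
      _ ≤ c * (Fs * (Real.sqrt 2 * Real.sqrt 𝒢)) := by rw [← hsplit]; exact h1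
      _ = Real.sqrt 2 * Fs * (c * Real.sqrt 𝒢) := by ring
      _ = Real.sqrt 2 * Fs * 𝒢 ^ α := by rw [hpow]
  rw [hD]
  nlinarith [hAlow, hcB]



end Aux
/-- algebraic decay of the velocity fluctuation when 1 < α < 3/2. -/
theorem stmt8 {d : ℕ} (hd : 1 ≤ d) (Φ F : ℝ → ℝ) (G : Euc d → Euc d) (α : ℝ)
    (hΦc : Continuous Φ) (hGc : Continuous G) (hFc : Continuous F)
    (hα : 1 < α ∧ α < 3 / 2)
    (Gs Φs Fs : ℝ) (hGs : 0 < Gs) (hΦs : 0 < Φs)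
    (hGodd : ∀ v : Euc d, G (-v) = -G v)
    (hGcoer : ∀ v : Euc d, Gs * ‖v‖ ^ (2 * α) ≤ ⟪G v, v⟫)
    (hΦlow : ∀ x : Euc d, Φs ≤ Φ ‖x‖)
    (hFbd : ∀ x : Euc d, ‖F (‖x‖ ^ 2) • x‖ ≤ Fs)
    (hFs : Fs < (2 : ℝ) ^ (α - 1 / 2) * Φs * Gs)
    (T : ℝ) (hT : 0 < T)
    (f : ℝ → Measure (Phase d))
    (hsol : IsWeakSolution Φ G F α (Set.Ico 0 T) f) :
    (0 < velFluc (f 0) →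
      ∀ t ∈ Set.Ico (0 : ℝ) T,
        velFluc (f t) ≤
          (velFluc (f 0) ^ (1 - α) + (α - 1) * ((2 : ℝ) ^ α * Φs * Gs - Real.sqrt 2 * Fs) * t)
            ^ (-(1 / (α - 1)))) ∧
    (velFluc (f 0) = 0 → ∀ t ∈ Set.Ico (0 : ℝ) T, velFluc (f t) = 0) := by
  obtain ⟨hreg, hweak⟩ := hsol
  obtain ⟨hα1, hα2⟩ := hα
  have hα0 : (0:ℝ) < α := by linarith
  have hα1' : (0:ℝ) < α - 1 := by linarith
  have hFs0 : 0 ≤ Fs := le_trans (norm_nonneg _) (hFbd 0)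
  set Cs := (2:ℝ) ^ α * Φs * Gs - Real.sqrt 2 * Fs with hCsdef
  have hCspos : 0 < Cs := by
    have hs2 : (0:ℝ) < Real.sqrt 2 := by positivity
    have h1 : Real.sqrt 2 * Fs < Real.sqrt 2 * ((2:ℝ) ^ (α - 1 / 2) * Φs * Gs) :=
      mul_lt_mul_of_pos_left hFs hs2
    have h2 : Real.sqrt 2 * ((2:ℝ) ^ (α - 1 / 2) * Φs * Gs) = (2:ℝ) ^ α * Φs * Gs := by
      rw [show Real.sqrt 2 * ((2:ℝ) ^ (α - 1 / 2) * Φs * Gs)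
          = (Real.sqrt 2 * (2:ℝ) ^ (α - 1 / 2)) * (Φs * Gs) from by ring,
        Real.sqrt_eq_rpow, ← Real.rpow_add (by norm_num : (0:ℝ) < 2),
        show (1:ℝ) / 2 + (α - 1 / 2) = α from by ring]
      ring
    rw [hCsdef]; rw [Real.sqrt_eq_rpow] at h1 h2 ⊢; linarith
  set D : ℝ → ℝ := fun t =>
    (∫ z, 2 * ⟪z.2, Hfield Φ G F α (f t) z.1 z.2⟫ ∂(f t))
      - (∑ i : Fin d, 2 * (∫ z, z.2 i ∂(f t))
          * (∫ z, Hfield Φ G F α (f t) z.1 z.2 i ∂(f t))) with hDdef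
  set g : ℝ → ℝ := fun t => velFluc (f t) with hgdef
  have hfact : ∀ t ∈ Set.Ico (0:ℝ) T, 0 ≤ g t ∧ D t ≤ -Cs * g t ^ α := by
    intro t ht
    obtain ⟨hprob, K, hK, hK0⟩ := hreg t ht
    haveI := hprob
    have h := core_estimate Φ F G α hΦc hGc hFc hα1 Gs Φs Fs hGs hΦs hFs0 hGodd hGcoer
      hΦlow hFbd (f t) hK hK0
    exact ⟨h.1, h.2⟩
  -- the derivative of the velocity fluctuation along the flow
  have hgderiv : ∀ t ∈ Set.Ico (0:ℝ) T, HasDerivWithinAt g (D t) (Set.Ico 0 T) t := by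
    intro t ht
    obtain ⟨hprob, K, hK, hK0⟩ := hreg t ht
    haveI := hprob
    -- test function ‖v‖²
    have hφ1 : ContDiff ℝ 1 (fun z : Phase d => ‖z.2‖ ^ 2) :=
      (contDiff_norm_sq ℝ).comp contDiff_snd
    have hS := hweak (fun z : Phase d => ‖z.2‖ ^ 2) hφ1 t ht
    have hfder : ∀ z : Phase d, fderiv ℝ (fun z : Phase d => ‖z.2‖ ^ 2) z
        (z.2, Hfield Φ G F α (f t) z.1 z.2)
        = 2 * ⟪z.2, Hfield Φ G F α (f t) z.1 z.2⟫ := by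
      intro z
      have hf : HasFDerivAt (fun z : Phase d => ‖z.2‖ ^ 2)
          ((2:ℕ) • ((innerSL ℝ) z.2).comp (ContinuousLinearMap.snd ℝ (Euc d) (Euc d))) z :=
        hasFDerivAt_snd.norm_sq
      rw [hf.fderiv]
      simp [two_smul, two_mul]
    have eS : ∫ z, fderiv ℝ (fun z : Phase d => ‖z.2‖ ^ 2) z
        (z.2, Hfield Φ G F α (f t) z.1 z.2) ∂(f t)
        = ∫ z, 2 * ⟪z.2, Hfield Φ G F α (f t) z.1 z.2⟫ ∂(f t) :=
      integral_congr_ae (Filter.Eventually.of_forall hfder)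
    rw [eS] at hS
    -- test functions v ↦ vᵢ
    have hmder : ∀ i : Fin d, HasDerivWithinAt (fun s => ∫ z, z.2 i ∂(f s))
        (∫ z, Hfield Φ G F α (f t) z.1 z.2 i ∂(f t)) (Set.Ico 0 T) t := by
      intro i
      set L : Phase d →L[ℝ] ℝ := (EuclideanSpace.proj (𝕜 := ℝ) i).comp
        (ContinuousLinearMap.snd ℝ (Euc d) (Euc d)) with hLdef
      have hLc : ContDiff ℝ 1 (fun z : Phase d => z.2 i) := L.contDiff
      have h := hweak (fun z : Phase d => z.2 i) hLc t ht
      have e : ∫ z, fderiv ℝ (fun z : Phase d => z.2 i) z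
          (z.2, Hfield Φ G F α (f t) z.1 z.2) ∂(f t)
          = ∫ z, Hfield Φ G F α (f t) z.1 z.2 i ∂(f t) := by
        refine integral_congr_ae (Filter.Eventually.of_forall fun z => ?_)
        show (fderiv ℝ (fun z : Phase d => z.2 i) z) (z.2, Hfield Φ G F α (f t) z.1 z.2)
            = Hfield Φ G F α (f t) z.1 z.2 i
        have hfd : fderiv ℝ (fun z : Phase d => z.2 i) z = L := L.fderiv
        rw [hfd]
        rfl
      rw [e] at h
      exact h
    have hsum : HasDerivWithinAt (fun s => ∑ i : Fin d, (∫ z, z.2 i ∂(f s)) ^ 2)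
        (∑ i : Fin d, 2 * (∫ z, z.2 i ∂(f t))
          * (∫ z, Hfield Φ G F α (f t) z.1 z.2 i ∂(f t))) (Set.Ico 0 T) t := by
      have h := HasDerivWithinAt.fun_sum (u := Finset.univ)
        (A := fun i s => (∫ z, z.2 i ∂(f s)) ^ 2)
        (A' := fun i => (2:ℕ) * (∫ z, z.2 i ∂(f t)) ^ 1
          * (∫ z, Hfield Φ G F α (f t) z.1 z.2 i ∂(f t)))
        (fun i _ => (hmder i).pow 2)
      refine h.congr_deriv ?_
      refine Finset.sum_congr rfl fun i _ => ?_
      push_cast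
      ring
    have hdiff := hS.sub hsum
    -- the function g agrees with the test-function representation on the time interval
    have hrepr : ∀ s ∈ Set.Ico (0:ℝ) T, g s =
        (∫ z, ‖z.2‖ ^ 2 ∂(f s)) - ∑ i : Fin d, (∫ z, z.2 i ∂(f s)) ^ 2 := by
      intro s hs
      obtain ⟨hprob', K', hK', hK0'⟩ := hreg s hs
      haveI := hprob'
      have hvint : Integrable (fun z : Phase d => z.2) (f s) :=
        integrable_of_cpt hK' hK0' continuous_snd
      have hcomp : ∀ i : Fin d, (∫ z, (z : Phase d).2 ∂(f s)) i = ∫ z, z.2 i ∂(f s) :=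
        fun i => ((EuclideanSpace.proj (𝕜 := ℝ) i).integral_comp_comm hvint).symm
      have hnorm : ‖∫ z, (z : Phase d).2 ∂(f s)‖ ^ 2
          = ∑ i : Fin d, (∫ z, z.2 i ∂(f s)) ^ 2 := by
        rw [← real_inner_self_eq_norm_sq, euc_dot]
        exact Finset.sum_congr rfl fun i _ => by rw [hcomp i]; ring
      show velFluc (f s) = _
      unfold velFluc
      rw [hnorm]
    exact hdiff.congr (fun s hs => hrepr s hs) (hrepr t ht)
  have hIci : ∀ x ∈ Set.Ico (0:ℝ) T, HasDerivWithinAt g (D x) (Set.Ici x) x := by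
    intro x hx
    refine (hgderiv x hx).mono_of_mem_nhdsWithin ?_
    rw [mem_nhdsWithin]
    exact ⟨Set.Iio T, isOpen_Iio, hx.2, fun y hy => ⟨le_trans hx.1 hy.2, hy.1⟩⟩
  have hgc : ContinuousOn g (Set.Ico 0 T) := fun x hx => (hgderiv x hx).continuousWithinAt
  constructor
  · -- positive initial fluctuation
    intro h𝒢0pos t ht
    set p : ℝ := -(1 / (α - 1)) with hpdef
    set c₀ := velFluc (f 0) ^ (1 - α) with hc₀def
    have hc₀pos : 0 < c₀ := Real.rpow_pos_of_pos h𝒢0pos _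
    set k := (α - 1) * Cs with hkdef
    have hkpos : 0 < k := mul_pos hα1' hCspos
    have hsub1 : Set.Icc (0:ℝ) t ⊆ Set.Ico 0 T :=
      fun y hy => ⟨hy.1, lt_of_le_of_lt hy.2 ht.2⟩
    have hsub2 : Set.Ico (0:ℝ) t ⊆ Set.Ico 0 T :=
      fun y hy => ⟨hy.1, lt_trans hy.2 ht.2⟩
    have hcompare : ∀ ε ∈ Set.Ioo (0:ℝ) k, g t ≤ (c₀ + (k - ε) * t) ^ p := by
      intro ε hε
      have hkε : 0 < k - ε := by linarith [hε.2]
      have hbase : ∀ s ∈ Set.Icc (0:ℝ) t, 0 < c₀ + (k - ε) * s := fun s hs =>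
        add_pos_of_pos_of_nonneg hc₀pos (mul_nonneg hkε.le hs.1)
      have hBder : ∀ s : ℝ, 0 < c₀ + (k - ε) * s →
          HasDerivAt (fun s => (c₀ + (k - ε) * s) ^ p)
            (p * (c₀ + (k - ε) * s) ^ (p - 1) * (k - ε)) s := by
        intro s hs
        have h1 : HasDerivAt (fun s : ℝ => c₀ + (k - ε) * s) (k - ε) s := by
          simpa using ((hasDerivAt_id s).const_mul (k - ε)).const_add c₀
        exact (Real.hasDerivAt_rpow_const (Or.inl (ne_of_gt hs))).comp s h1
      have hB0 : (c₀ + (k - ε) * 0) ^ p = velFluc (f 0) := by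
        rw [mul_zero, add_zero, hc₀def, ← Real.rpow_mul h𝒢0pos.le,
          show (1 - α) * p = 1 from by rw [hpdef]; field_simp; ring,
          Real.rpow_one]
      have hbound : ∀ x ∈ Set.Ico (0:ℝ) t, g x = (c₀ + (k - ε) * x) ^ p →
          D x < p * (c₀ + (k - ε) * x) ^ (p - 1) * (k - ε) := by
        intro x hx hgB
        have hxm : x ∈ Set.Ico (0:ℝ) T := hsub2 hx
        have hfx := hfact x hxm
        have hb : 0 < c₀ + (k - ε) * x := hbase x ⟨hx.1, hx.2.le⟩
        have hexp : p - 1 = p * α := by rw [hpdef]; field_simp; ring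
        have heq : g x ^ α = (c₀ + (k - ε) * x) ^ (p * α) := by
          rw [hgB, ← Real.rpow_mul hb.le]
        have hX : 0 < (c₀ + (k - ε) * x) ^ (p * α) := Real.rpow_pos_of_pos hb _
        have hcoef : -Cs < p * (k - ε) := by
          have : p * (k - ε) = -Cs + ε / (α - 1) := by
            rw [hpdef, hkdef]; field_simp; ring
          rw [this]
          have := div_pos hε.1 hα1'
          linarith
        calc D x ≤ -Cs * g x ^ α := hfx.2
          _ = -Cs * (c₀ + (k - ε) * x) ^ (p * α) := by rw [heq]
          _ < (p * (k - ε)) * (c₀ + (k - ε) * x) ^ (p * α) :=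
              mul_lt_mul_of_pos_right hcoef hX
          _ = p * (c₀ + (k - ε) * x) ^ (p - 1) * (k - ε) := by rw [hexp]; ring
      have key := image_le_of_deriv_right_lt_deriv_boundary'
        (hgc.mono hsub1) (fun x hx => hIci x (hsub2 hx))
        (by rw [hB0])
        (fun s hs => (hBder s (hbase s hs)).continuousAt.continuousWithinAt)
        (fun x hx => (hBder x (hbase x ⟨hx.1, hx.2.le⟩)).hasDerivWithinAt)
        hbound
      exact key ⟨ht.1, le_refl t⟩
    have hb0 : 0 < c₀ + k * t := add_pos_of_pos_of_nonneg hc₀pos (mul_nonneg hkpos.le ht.1)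
    have htend : Filter.Tendsto (fun ε : ℝ => (c₀ + (k - ε) * t) ^ p) (nhdsWithin 0 (Set.Ioi 0))
        (nhds ((c₀ + k * t) ^ p)) := by
      have h1 : ContinuousAt (fun ε : ℝ => c₀ + (k - ε) * t) 0 := by fun_prop
      have h3 : ContinuousAt (fun ε : ℝ => (c₀ + (k - ε) * t) ^ p) 0 :=
        h1.rpow_const (Or.inl (by simpa using ne_of_gt hb0))
      have h4 := h3.tendsto
      simp only [sub_zero] at h4
      exact h4.mono_left nhdsWithin_le_nhds
    show g t ≤ (c₀ + k * t) ^ p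
    refine ge_of_tendsto htend ?_
    filter_upwards [Ioo_mem_nhdsGT_of_mem (⟨le_refl (0:ℝ), hkpos⟩ : (0:ℝ) ∈ Set.Ico 0 k)]
      with ε hε using hcompare ε hε
  · -- zero initial fluctuation
    intro h𝒢00 t ht
    have hsub1 : Set.Icc (0:ℝ) t ⊆ Set.Ico 0 T :=
      fun y hy => ⟨hy.1, lt_of_le_of_lt hy.2 ht.2⟩
    have hsub2 : Set.Ico (0:ℝ) t ⊆ Set.Ico 0 T :=
      fun y hy => ⟨hy.1, lt_trans hy.2 ht.2⟩
    have hle : g t ≤ (fun _ : ℝ => (0:ℝ)) t := by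
      refine image_le_of_deriv_right_le_deriv_boundary (f' := D)
        (hgc.mono hsub1) (fun x hx => hIci x (hsub2 hx))
        (by show g 0 ≤ 0; rw [hgdef]; simpa using le_of_eq h𝒢00)
        continuousOn_const
        (fun x _ => (hasDerivAt_const x (0:ℝ)).hasDerivWithinAt)
        (fun x hx => ?_) ⟨ht.1, le_refl t⟩
      have hfx := hfact x (hsub2 hx)
      have h1 : 0 ≤ Cs * g x ^ α := mul_nonneg hCspos.le (Real.rpow_nonneg hfx.1 α)
      linarith [hfx.2]
    have hge := (hfact t ht).1
    show velFluc (f t) = 0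
    have h1 : g t ≤ 0 := hle
    have : g t = 0 := le_antisymm h1 hge
    rw [hgdef] at this
    exact this
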